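/- Let p > 2, S ⊆ {0,…,N−1}^d, E = S + [0,1]^d, and suppose the Λ(p) estimate ‖∑_{a∈S} c_a e^{2πi a·x}‖_{L^p([0,1]^d)} ≤ C (∑|c_a|^2)^{1/2} holds for all coefficients. Then for every h ∈ L^2(ℝ^d) supported on E, one has ‖ĥ‖_{L^p([0,1]^d)} ≲ C ‖h‖_{L^2(ℝ^d)}, with implicit constant depending only on d and p. -/

import Mathlib

open MeasureTheory ENNReal Function


lemma minkowski_lintegral {α β : Type*} [MeasurableSpace α] [MeasurableSpace β]
    (μ : Measure α) (ν : Measure β) [SFinite μ] [SFinite ν]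
    {p : ℝ} (hp : 1 < p) (f : α → β → ℝ≥0∞)
    (hf : Measurable (uncurry f))
    (hA : ∫⁻ ξ, (∫⁻ z, f z ξ ∂μ) ^ p ∂ν ≠ ⊤) :
    (∫⁻ ξ, (∫⁻ z, f z ξ ∂μ) ^ p ∂ν) ^ (1/p) ≤ ∫⁻ z, (∫⁻ ξ, f z ξ ^ p ∂ν) ^ (1/p) ∂μ := by
  set I : β → ℝ≥0∞ := fun ξ => ∫⁻ z, f z ξ ∂μ with hI
  have hImeas : Measurable I := hf.lintegral_prod_left
  set A : ℝ≥0∞ := ∫⁻ ξ, I ξ ^ p ∂ν with hAdef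
  set M : ℝ≥0∞ := ∫⁻ z, (∫⁻ ξ, f z ξ ^ p ∂ν) ^ (1/p) ∂μ with hM
  have hp0 : (0:ℝ) < p := by linarith
  rcases eq_or_ne A 0 with h0 | h0
  · rw [h0, ENNReal.zero_rpow_of_pos (by positivity)]; exact zero_le
  -- conjugate exponent
  set q : ℝ := p / (p - 1) with hq
  have hqp : q.HolderConjugate p := (Real.holderConjugate_iff_eq_conjExponent hp).mpr rfl |>.symm
  have hIae : ∀ᵐ ξ ∂ν, I ξ < ⊤ := by
    have := ae_lt_top (hImeas.pow_const p) hA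
    filter_upwards [this] with ξ hξ
    by_contra h
    simp only [not_lt, top_le_iff] at h
    rw [h, ENNReal.top_rpow_of_pos hp0] at hξ; exact (lt_irrefl _ hξ)
  -- step 1 : A = ∫ I^{p-1} * I
  have step1 : A = ∫⁻ ξ, I ξ ^ (p-1) * I ξ ∂ν := by
    refine lintegral_congr fun ξ => ?_
    conv_lhs => rw [show p = (p-1) + 1 by ring]
    rw [ENNReal.rpow_add_of_nonneg _ _ (by linarith) zero_le_one, ENNReal.rpow_one]
  -- step 2 : = ∫ ξ, ∫ z, I ξ^{p-1} * f z ξ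
  have step2 : ∫⁻ ξ, I ξ ^ (p-1) * I ξ ∂ν = ∫⁻ ξ, ∫⁻ z, I ξ ^ (p-1) * f z ξ ∂μ ∂ν := by
    refine lintegral_congr_ae ?_
    filter_upwards [hIae] with ξ hξ
    rw [lintegral_const_mul' _ _ (ENNReal.rpow_ne_top_of_nonneg (by linarith) hξ.ne)]
  -- step 3 : swap
  have step3 : ∫⁻ ξ, ∫⁻ z, I ξ ^ (p-1) * f z ξ ∂μ ∂ν = ∫⁻ z, ∫⁻ ξ, I ξ ^ (p-1) * f z ξ ∂ν ∂μ := by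
    refine (lintegral_lintegral_swap ?_).symm
    apply Measurable.aemeasurable
    show Measurable fun a : α × β => I a.2 ^ (p-1) * f a.1 a.2
    exact ((hImeas.comp measurable_snd).pow_const _).mul hf
  -- step 4 : Hölder in ξ
  have step4 : ∫⁻ z, ∫⁻ ξ, I ξ ^ (p-1) * f z ξ ∂ν ∂μ ≤ A ^ (1/q) * M := by
    have key : ∀ z, ∫⁻ ξ, I ξ ^ (p-1) * f z ξ ∂ν ≤ A ^ (1/q) * (∫⁻ ξ, f z ξ ^ p ∂ν) ^ (1/p) := by
      intro z
      have := ENNReal.lintegral_mul_le_Lp_mul_Lq ν hqp (f := fun ξ => I ξ ^ (p-1)) (g := f z)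
        ((hImeas.pow_const (p-1)).aemeasurable) (hf.of_uncurry_left.aemeasurable)
      refine le_trans this ?_
      have : ∫⁻ ξ, (I ξ ^ (p-1)) ^ q ∂ν = A := by
        refine lintegral_congr fun ξ => ?_
        rw [← ENNReal.rpow_mul]
        congr 1
        have h1 : p - 1 ≠ 0 := by linarith
        rw [hq]
        field_simp
      rw [this]
    calc ∫⁻ z, ∫⁻ ξ, I ξ ^ (p-1) * f z ξ ∂ν ∂μ
        ≤ ∫⁻ z, A ^ (1/q) * (∫⁻ ξ, f z ξ ^ p ∂ν) ^ (1/p) ∂μ := lintegral_mono key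
      _ = A ^ (1/q) * M := lintegral_const_mul' _ _
          (ENNReal.rpow_ne_top_of_nonneg (one_div_nonneg.mpr hqp.pos.le) hA)
  have main : A ≤ A ^ (1/q) * M := by
    calc A = ∫⁻ ξ, I ξ ^ (p-1) * I ξ ∂ν := step1
      _ = _ := step2
      _ = _ := step3
      _ ≤ _ := step4
  have hsplit : A = A ^ (1/q) * A ^ (1/p) := by
    rw [← ENNReal.rpow_add_of_nonneg _ _ (one_div_nonneg.mpr hqp.pos.le)
      (one_div_nonneg.mpr hp0.le)]
    have : 1/q + 1/p = 1 := by
      have := hqp.inv_add_inv_eq_inv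
      simpa [one_div] using this
    rw [this, ENNReal.rpow_one]
  have main2 : A ^ (1/q) * A ^ (1/p) ≤ A ^ (1/q) * M := hsplit.symm.trans_le main
  have hne : A ^ (1/q) ≠ 0 := by
    simp [ENNReal.rpow_eq_zero_iff, h0, hA]
  exact (ENNReal.mul_le_mul_iff_right hne
    (ENNReal.rpow_ne_top_of_nonneg (one_div_nonneg.mpr hqp.pos.le) hA)).mp main2


section Aux
variable {d : ℕ}

noncomputable def avv (a : Fin d → ℤ) : Fin d → ℝ := fun i => (a i : ℝ)

def box (a : Fin d → ℤ) : Set (Fin d → ℝ) :=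
  Set.univ.pi fun i => Set.Ico ((a i : ℝ)) ((a i : ℝ) + 1)

lemma box_measurable (a : Fin d → ℤ) : MeasurableSet (box a) :=
  MeasurableSet.univ_pi fun _ => measurableSet_Ico

lemma box_volume (a : Fin d → ℤ) : volume (box a) = 1 := by
  rw [box, volume_pi_pi]
  simp [Real.volume_Ico]

lemma box_subset_Icc (a : Fin d → ℤ) :
    box a ⊆ Set.Icc (fun i => (a i : ℝ)) (fun i => (a i : ℝ) + 1) := by
  intro x hx
  simp only [box, Set.mem_pi, Set.mem_univ, forall_true_left, Set.mem_Ico] at hx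
  exact ⟨fun i => (hx i).1, fun i => le_of_lt (hx i).2⟩

lemma Icc_volume (a : Fin d → ℤ) :
    volume (Set.Icc (fun i => (a i : ℝ)) (fun i => (a i : ℝ) + 1)) = 1 := by
  rw [Real.volume_Icc_pi]
  simp

lemma box_disjoint {a b : Fin d → ℤ} (hab : a ≠ b) : Disjoint (box a) (box b) := by
  rw [Set.disjoint_left]
  intro x hxa hxb
  apply hab
  funext i
  simp only [box, Set.mem_pi, Set.mem_univ, forall_true_left, Set.mem_Ico] at hxa hxb
  have ha := hxa i
  have hb := hxb i
  have h1 : (a i : ℝ) < b i + 1 := lt_of_le_of_lt ha.1 hb.2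
  have h2 : (b i : ℝ) < a i + 1 := lt_of_le_of_lt hb.1 ha.2
  have h1' : (a i : ℤ) < b i + 1 := by exact_mod_cast h1
  have h2' : (b i : ℤ) < a i + 1 := by exact_mod_cast h2
  omega

lemma box_preimage (a : Fin d → ℤ) :
    (fun z => avv a + z) ⁻¹' (box a) = box (0 : Fin d → ℤ) := by
  ext z
  simp only [box, Set.mem_preimage, Set.mem_pi, Set.mem_univ, forall_true_left, Set.mem_Ico,
    Pi.add_apply, avv, Pi.zero_apply, Int.cast_zero]
  constructor
  · intro hz i; have := hz i; constructor <;> linarith [this.1, this.2]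
  · intro hz i; have := hz i; constructor <;> linarith [this.1, this.2]

lemma norm_exp_eq_one {z : ℂ} (hz : z.re = 0) : ‖Complex.exp z‖ = 1 := by
  rw [Complex.norm_exp, hz, Real.exp_zero]

lemma re_I_mul (c r : ℝ) : ((c : ℂ) * Complex.I * (r : ℂ)).re = 0 := by
  simp [Complex.mul_re]

lemma norm_exp_neg2pi (r : ℝ) : ‖Complex.exp (-(2 * Real.pi * Complex.I) * (r : ℂ))‖ = 1 := by
  apply norm_exp_eq_one
  have : -(2 * (Real.pi : ℂ) * Complex.I) * (r : ℂ) = ((-(2 * Real.pi) : ℝ) : ℂ) * Complex.I * (r : ℂ) := by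
    push_cast; ring
  rw [this, re_I_mul]

end Aux

section Key
open Complex in
theorem key (d : ℕ) (p : ℝ) (hp : 2 < p) (C : ℝ) (hC : 0 < C)
    (S : Finset (Fin d → ℤ))
    (hyp : ∀ c : (Fin d → ℤ) → ℂ,
        (∫ x in Set.Icc (0 : Fin d → ℝ) 1,
            ‖∑ a ∈ S, c a * Complex.exp (2 * Real.pi * Complex.I *
              ((∑ i, (a i : ℝ) * x i : ℝ) : ℂ))‖ ^ p) ^ (1 / p) ≤
          C * Real.sqrt (∑ a ∈ S, ‖c a‖ ^ 2))
    (h : (Fin d → ℝ) → ℂ) (hh2 : MemLp h 2 volume) (hsm : StronglyMeasurable h)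
    (hsupp : Function.support h ⊆
        ⋃ a ∈ S, Set.Icc (fun i => (a i : ℝ)) (fun i => (a i : ℝ) + 1)) :
    (∫ ξ in Set.Icc (0 : Fin d → ℝ) 1,
          ‖∫ x, h x * Complex.exp (-(2 * Real.pi * Complex.I) *
            ((∑ i, x i * ξ i : ℝ) : ℂ))‖ ^ p) ^ (1 / p) ≤
        C * Real.sqrt (∫ x, ‖h x‖ ^ 2) := by
  have hp0 : (0:ℝ) < p := by linarith
  set Q : Set (Fin d → ℝ) := Set.Icc 0 1 with hQ
  have hQm : MeasurableSet Q := measurableSet_Icc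
  have hQvol : volume Q = 1 := by
    rw [hQ, Real.volume_Icc_pi]; simp
  set E : Set (Fin d → ℝ) := ⋃ a ∈ S, Set.Icc (fun i => (a i : ℝ)) (fun i => (a i : ℝ) + 1)
    with hE
  set B0 : Set (Fin d → ℝ) := box (0 : Fin d → ℤ) with hB0
  have hB0vol : volume B0 = 1 := box_volume 0
  set ph : (Fin d → ℝ) → (Fin d → ℝ) → ℂ := fun x ξ =>
    Complex.exp (-(2 * Real.pi * Complex.I) * ((∑ i, x i * ξ i : ℝ) : ℂ)) with hph
  have hph_norm : ∀ x ξ, ‖ph x ξ‖ = 1 := fun x ξ => norm_exp_neg2pi _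
  have hph_cont : ∀ ξ, Continuous fun x => ph x ξ := by
    intro ξ
    have : Continuous fun x : Fin d → ℝ => (∑ i, x i * ξ i : ℝ) :=
      continuous_finset_sum _ fun i _ => (continuous_apply i).mul continuous_const
    exact Complex.continuous_exp.comp (continuous_const.mul (Complex.continuous_ofReal.comp this))
  have hph_cont' : ∀ x, Continuous fun ξ => ph x ξ := by
    intro x
    have : Continuous fun ξ : Fin d → ℝ => (∑ i, x i * ξ i : ℝ) :=
      continuous_finset_sum _ fun i _ => continuous_const.mul (continuous_apply i)
    exact Complex.continuous_exp.comp (continuous_const.mul (Complex.continuous_ofReal.comp this))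
  set F : (Fin d → ℝ) → ℂ := fun ξ => ∫ x, h x * ph x ξ with hF
  set G : (Fin d → ℝ) → (Fin d → ℝ) → ℂ := fun z ξ =>
    ∑ a ∈ S, h (avv a + z) * ph (avv a + z) ξ with hG
  -- integrability of h
  have hEm : MeasurableSet E := by
    exact Finset.measurableSet_biUnion S fun a _ => measurableSet_Icc
  have hEvol : volume E ≠ ⊤ := by
    refine ne_top_of_le_ne_top ?_ (measure_biUnion_finset_le S _)
    simp [Icc_volume]
  have hint : Integrable h volume := by
    rw [← memLp_one_iff_integrable]
    refine hh2.mono_exponent_of_measure_support_ne_top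
      (s := E) (fun x hx => ?_) hEvol (by norm_num)
    by_contra hne
    exact hx (hsupp hne)
  have hint_mul : ∀ ξ, Integrable (fun x => h x * ph x ξ) volume := by
    intro ξ
    have := hint.bdd_mul ((hph_cont ξ).aestronglyMeasurable)
      (c := 1) (Filter.Eventually.of_forall fun x => le_of_eq (hph_norm x ξ))
    simpa [mul_comm] using this
  -- translation machinery
  have hemb : ∀ a : Fin d → ℤ, MeasurableEmbedding (fun z : Fin d → ℝ => avv a + z) :=
    fun a => (MeasurableEquiv.addLeft (avv a)).measurableEmbedding
  have hmp : ∀ a : Fin d → ℤ, MeasurePreserving (fun z : Fin d → ℝ => avv a + z)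
      volume volume := fun a => measurePreserving_add_left volume (avv a)
  have hmpr : ∀ (a : Fin d → ℤ) (s : Set (Fin d → ℝ)), MeasurableSet s →
      MeasurePreserving (fun z : Fin d → ℝ => avv a + z)
        (volume.restrict ((fun z : Fin d → ℝ => avv a + z) ⁻¹' s)) (volume.restrict s) := by
    intro a s hs
    refine ⟨measurable_const_add _, ?_⟩
    rw [← Measure.restrict_map (measurable_const_add _) hs, (hmp a).map_eq]
  -- the union of boxes is a.e. equal to E
  have hEae : E =ᶠ[ae volume] ⋃ a ∈ S, box a := by
    rw [ae_eq_set]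
    constructor
    · have hsub : E \ (⋃ a ∈ S, box a) ⊆
          ⋃ a ∈ S, (Set.Icc (fun i => (a i : ℝ)) (fun i => (a i : ℝ) + 1) \ box a) := by
        rintro x ⟨hxE, hxU⟩
        rw [hE, Set.mem_iUnion₂] at hxE
        obtain ⟨a, ha, hxa⟩ := hxE
        exact Set.mem_iUnion₂.mpr ⟨a, ha, hxa, fun hb => hxU (Set.mem_iUnion₂.mpr ⟨a, ha, hb⟩)⟩
      refine measure_mono_null hsub (le_antisymm
        (le_trans (measure_biUnion_finset_le _ _) (le_of_eq ?_)) zero_le)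
      refine Finset.sum_eq_zero fun a _ => ?_
      rw [measure_diff (box_subset_Icc a) (box_measurable a).nullMeasurableSet
        (by rw [box_volume]; exact one_ne_top), box_volume, Icc_volume, tsub_self]
    · have hsub : (⋃ a ∈ S, box a) ⊆ E := Set.iUnion₂_mono fun a _ => box_subset_Icc a
      rw [Set.diff_eq_empty.mpr hsub, measure_empty]
  -- decomposition of the Fourier integral
  have hdecomp : ∀ ξ, F ξ = ∫ z in B0, G z ξ := by
    intro ξ
    have h1 : F ξ = ∫ x in E, h x * ph x ξ := by
      refine (setIntegral_eq_integral_of_forall_compl_eq_zero fun x hx => ?_).symm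
      rw [Function.notMem_support.mp (fun hs => hx (hsupp hs)), zero_mul]
    have h2 : ∫ x in E, h x * ph x ξ = ∫ x in ⋃ a ∈ S, box a, h x * ph x ξ :=
      setIntegral_congr_set hEae
    have h3 : ∫ x in ⋃ a ∈ S, box a, h x * ph x ξ = ∑ a ∈ S, ∫ x in box a, h x * ph x ξ :=
      integral_biUnion_finset S (fun a _ => box_measurable a)
        (fun a _ b _ hab => box_disjoint hab) (fun a _ => (hint_mul ξ).integrableOn)
    have h4 : ∀ a : Fin d → ℤ, ∫ x in box a, h x * ph x ξ
        = ∫ z in B0, h (avv a + z) * ph (avv a + z) ξ := by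
      intro a
      rw [hB0, ← box_preimage a]
      exact ((hmp a).setIntegral_preimage_emb (hemb a) _ _).symm
    have h5 : ∑ a ∈ S, ∫ z in B0, h (avv a + z) * ph (avv a + z) ξ = ∫ z in B0, G z ξ := by
      refine (integral_finset_sum S fun a _ => ?_).symm
      have : IntegrableOn ((fun x => h x * ph x ξ) ∘ (fun z : Fin d → ℝ => avv a + z))
          ((fun z : Fin d → ℝ => avv a + z) ⁻¹' box a) volume :=
        ((hmpr a (box a) (box_measurable a)).integrable_comp_emb (hemb a)).mpr
          ((hint_mul ξ).integrableOn)
      rw [box_preimage a] at this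
      exact this
    rw [h1, h2, h3, Finset.sum_congr rfl fun a _ => h4 a, h5]
  -- norm identity: relate G to the exponential sum in the hypothesis
  have hGnorm : ∀ z ξ, ‖G z ξ‖ = ‖∑ a ∈ S, (starRingEnd ℂ) (h (avv a + z)) *
      Complex.exp (2 * Real.pi * Complex.I * ((∑ i, (a i : ℝ) * ξ i : ℝ) : ℂ))‖ := by
    intro z ξ
    have hterm : ∀ a : Fin d → ℤ,
        h (avv a + z) * ph (avv a + z) ξ =
        (starRingEnd ℂ) ((starRingEnd ℂ) (h (avv a + z)) *
          Complex.exp (2 * Real.pi * Complex.I * ((∑ i, (a i : ℝ) * ξ i : ℝ) : ℂ))) *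
          ph z ξ := by
      intro a
      have hsum : (∑ i, (avv a + z) i * ξ i : ℝ) =
          (∑ i, (a i : ℝ) * ξ i) + ∑ i, z i * ξ i := by
        rw [← Finset.sum_add_distrib]
        refine Finset.sum_congr rfl fun i _ => ?_
        simp [avv, add_mul]
      rw [map_mul, Complex.conj_conj, ← Complex.exp_conj]
      simp only [hph]
      rw [mul_assoc (h (avv a + z)), ← Complex.exp_add]
      have harg : (starRingEnd ℂ) (2 * (Real.pi:ℂ) * Complex.I * ((∑ i, (a i : ℝ) * ξ i : ℝ) : ℂ)) +
          (-(2 * (Real.pi:ℂ) * Complex.I) * ((∑ i, z i * ξ i : ℝ) : ℂ)) =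
          -(2 * (Real.pi:ℂ) * Complex.I) * ((∑ i, (avv a + z) i * ξ i : ℝ) : ℂ) := by
        rw [hsum]
        simp only [map_mul, map_ofNat, Complex.conj_I, Complex.conj_ofReal]
        push_cast
        ring
      rw [harg]
    calc ‖G z ξ‖ = ‖(∑ a ∈ S, (starRingEnd ℂ) ((starRingEnd ℂ) (h (avv a + z)) *
          Complex.exp (2 * Real.pi * Complex.I * ((∑ i, (a i : ℝ) * ξ i : ℝ) : ℂ)))) *
          ph z ξ‖ := by
            simp only [hG]
            rw [Finset.sum_mul]
            exact congrArg _ (Finset.sum_congr rfl fun a _ => hterm a)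
      _ = ‖∑ a ∈ S, (starRingEnd ℂ) (h (avv a + z)) *
          Complex.exp (2 * Real.pi * Complex.I * ((∑ i, (a i : ℝ) * ξ i : ℝ) : ℂ))‖ := by
            rw [norm_mul, hph_norm, mul_one, ← map_sum]
            exact RCLike.norm_conj _
  -- continuity of G in ξ
  have hGcont : ∀ z, Continuous fun ξ => G z ξ := by
    intro z
    exact continuous_finset_sum _ fun a _ => continuous_const.mul (hph_cont' _)
  -- per-z bound from the hypothesis
  have hz_bound : ∀ z, (∫⁻ ξ in Q, (‖G z ξ‖₊ : ℝ≥0∞) ^ p) ^ (1/p)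
      ≤ ENNReal.ofReal (C * Real.sqrt (∑ a ∈ S, ‖h (avv a + z)‖ ^ 2)) := by
    intro z
    have hbound := hyp (fun a => (starRingEnd ℂ) (h (avv a + z)))
    have heqI : (∫ ξ in Q, ‖∑ a ∈ S, (starRingEnd ℂ) (h (avv a + z)) *
        Complex.exp (2 * Real.pi * Complex.I * ((∑ i, (a i : ℝ) * ξ i : ℝ) : ℂ))‖ ^ p)
        = ∫ ξ in Q, ‖G z ξ‖ ^ p :=
      setIntegral_congr_fun hQm fun ξ _ => by rw [hGnorm z ξ]
    rw [heqI] at hbound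
    simp only [RCLike.norm_conj] at hbound
    have hcont : Continuous fun ξ => ‖G z ξ‖ ^ p :=
      ((hGcont z).norm).rpow_const fun x => Or.inr hp0.le
    have hIntOn : IntegrableOn (fun ξ => ‖G z ξ‖ ^ p) Q volume :=
      hcont.continuousOn.integrableOn_compact isCompact_Icc
    have hlint : ∫⁻ ξ in Q, (‖G z ξ‖₊ : ℝ≥0∞) ^ p
        = ENNReal.ofReal (∫ ξ in Q, ‖G z ξ‖ ^ p) := by
      rw [ofReal_integral_eq_lintegral_ofReal hIntOn
        (Filter.Eventually.of_forall fun ξ => by positivity)]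
      refine lintegral_congr fun ξ => ?_
      rw [← ENNReal.ofReal_rpow_of_nonneg (norm_nonneg _) hp0.le, ofReal_norm, enorm_eq_nnnorm]
    rw [hlint, ENNReal.ofReal_rpow_of_nonneg (integral_nonneg fun ξ => by positivity)
      (by positivity)]
    exact ENNReal.ofReal_le_ofReal hbound
  -- strong measurability of G jointly
  have hGsm : StronglyMeasurable (fun q : (Fin d → ℝ) × (Fin d → ℝ) => G q.1 q.2) := by
    simp only [hG]
    refine Finset.stronglyMeasurable_fun_sum S fun a _ => StronglyMeasurable.mul ?_ ?_
    · exact hsm.comp_measurable (measurable_fst.const_add (avv a))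
    · refine Continuous.stronglyMeasurable ?_
      apply Complex.continuous_exp.comp
      refine Continuous.mul continuous_const (Complex.continuous_ofReal.comp ?_)
      refine continuous_finset_sum _ fun i _ => Continuous.mul ?_ ?_
      · exact continuous_const.add ((continuous_apply i).comp continuous_fst)
      · exact (continuous_apply i).comp continuous_snd
  -- L¹ bound for sections of G
  have hL1 : ∫⁻ x, (‖h x‖₊ : ℝ≥0∞) ∂volume ≠ ⊤ := hint.2.ne
  have hGL1 : ∀ ξ, ∫⁻ z in B0, (‖G z ξ‖₊ : ℝ≥0∞) ≤ S.card * ∫⁻ x, (‖h x‖₊ : ℝ≥0∞) := by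
    intro ξ
    have hpt : ∀ z, (‖G z ξ‖₊ : ℝ≥0∞) ≤ ∑ a ∈ S, (‖h (avv a + z)‖₊ : ℝ≥0∞) := by
      intro z
      calc (‖G z ξ‖₊ : ℝ≥0∞) ≤ ∑ a ∈ S, (‖h (avv a + z) * ph (avv a + z) ξ‖₊ : ℝ≥0∞) := by
            rw [hG]
            exact_mod_cast ENNReal.coe_le_coe.mpr (nnnorm_sum_le S _)
        _ = ∑ a ∈ S, (‖h (avv a + z)‖₊ : ℝ≥0∞) := by
            refine Finset.sum_congr rfl fun a _ => ?_
            rw [nnnorm_mul]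
            have : ‖ph (avv a + z) ξ‖₊ = 1 := by
              ext; exact hph_norm _ _
            rw [this, mul_one]
    calc ∫⁻ z in B0, (‖G z ξ‖₊ : ℝ≥0∞)
        ≤ ∫⁻ z in B0, ∑ a ∈ S, (‖h (avv a + z)‖₊ : ℝ≥0∞) := lintegral_mono hpt
      _ ≤ ∫⁻ z, ∑ a ∈ S, (‖h (avv a + z)‖₊ : ℝ≥0∞) :=
          lintegral_mono' Measure.restrict_le_self le_rfl
      _ = ∑ a ∈ S, ∫⁻ z, (‖h (avv a + z)‖₊ : ℝ≥0∞) :=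
          lintegral_finset_sum S fun a _ =>
            (hsm.measurable.comp (measurable_const_add (avv a))).enorm
      _ = ∑ a ∈ S, ∫⁻ x, (‖h x‖₊ : ℝ≥0∞) := by
          refine Finset.sum_congr rfl fun a _ => ?_
          exact (hmp a).lintegral_comp hsm.measurable.enorm
      _ = S.card * ∫⁻ x, (‖h x‖₊ : ℝ≥0∞) := by
          rw [Finset.sum_const, nsmul_eq_mul]
  -- Minkowski step
  have hmink : (∫⁻ ξ in Q, (‖F ξ‖₊ : ℝ≥0∞) ^ p) ^ (1/p)
      ≤ ∫⁻ z in B0, (∫⁻ ξ in Q, (‖G z ξ‖₊ : ℝ≥0∞) ^ p) ^ (1/p) := by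
    have hptF : ∀ ξ, (‖F ξ‖₊ : ℝ≥0∞) ≤ ∫⁻ z in B0, (‖G z ξ‖₊ : ℝ≥0∞) := by
      intro ξ
      rw [hdecomp ξ]
      exact enorm_integral_le_lintegral_enorm _
    have h1 : (∫⁻ ξ in Q, (‖F ξ‖₊ : ℝ≥0∞) ^ p) ^ (1/p)
        ≤ (∫⁻ ξ in Q, (∫⁻ z in B0, (‖G z ξ‖₊ : ℝ≥0∞)) ^ p) ^ (1/p) := by
      refine ENNReal.rpow_le_rpow (lintegral_mono fun ξ => ?_) (by positivity)
      exact ENNReal.rpow_le_rpow (hptF ξ) hp0.le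
    refine h1.trans ?_
    refine minkowski_lintegral (volume.restrict B0) (volume.restrict Q) (by linarith)
      (fun z ξ => (‖G z ξ‖₊ : ℝ≥0∞)) ?_ ?_
    · exact hGsm.measurable.enorm
    · -- finiteness
      set K : ℝ≥0∞ := S.card * ∫⁻ x, (‖h x‖₊ : ℝ≥0∞) with hK
      have hKne : K ≠ ⊤ := by
        rw [hK]
        exact ENNReal.mul_ne_top (by simp) hL1
      have : ∫⁻ ξ in Q, (∫⁻ z in B0, (‖G z ξ‖₊ : ℝ≥0∞)) ^ p ≤ K ^ p * volume Q := by
        calc ∫⁻ ξ in Q, (∫⁻ z in B0, (‖G z ξ‖₊ : ℝ≥0∞)) ^ p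
            ≤ ∫⁻ _ in Q, K ^ p := lintegral_mono fun ξ =>
              ENNReal.rpow_le_rpow (hGL1 ξ) hp0.le
          _ = K ^ p * volume Q := by rw [lintegral_const, Measure.restrict_apply_univ]
      refine ne_top_of_le_ne_top ?_ this
      rw [hQvol, mul_one]
      exact ENNReal.rpow_ne_top_of_nonneg hp0.le hKne
  -- continuity of F
  have hFcont : Continuous F := by
    rw [hF]
    refine continuous_of_dominated (fun ξ => (hint_mul ξ).aestronglyMeasurable)
      (fun ξ => Filter.Eventually.of_forall fun x => ?_) hint.norm
      (Filter.Eventually.of_forall fun x => continuous_const.mul (hph_cont' x))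
    rw [norm_mul, hph_norm, mul_one]
  -- the right-hand side chain
  set L2 : ℝ≥0∞ := ∫⁻ x, (‖h x‖₊ : ℝ≥0∞) ^ (2:ℕ) with hL2
  have hL2ne : L2 ≠ ⊤ := by
    have h1 := hh2.2
    rw [eLpNorm_eq_lintegral_rpow_enorm_toReal (by norm_num) (by norm_num)] at h1
    simp only [ENNReal.toReal_ofNat, enorm_eq_nnnorm] at h1
    have h2 : ∫⁻ x, (‖h x‖₊ : ℝ≥0∞) ^ (2:ℝ) ≠ ⊤ := by
      intro hcon
      rw [hcon, ENNReal.top_rpow_of_pos (by norm_num)] at h1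
      exact lt_irrefl _ h1
    rw [hL2]
    have heq : ∀ x : Fin d → ℝ, (‖h x‖₊ : ℝ≥0∞) ^ (2:ℝ) = (‖h x‖₊ : ℝ≥0∞) ^ (2:ℕ) := by
      intro x
      rw [show ((2:ℝ)) = ((2:ℕ):ℝ) by norm_num, ENNReal.rpow_natCast]
    rw [← lintegral_congr heq]
    exact h2
  set g : (Fin d → ℝ) → ℝ := fun z => Real.sqrt (∑ a ∈ S, ‖h (avv a + z)‖ ^ 2) with hg
  have hgmeas : Measurable g := by
    apply Measurable.sqrt
    exact Finset.measurable_sum S fun a _ =>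
      ((hsm.measurable.comp (measurable_const_add (avv a))).norm.pow_const 2)
  have hRHS : ∫⁻ z in B0, ENNReal.ofReal (C * g z) ≤ ENNReal.ofReal C * L2 ^ ((1:ℝ)/2) := by
    have hsplit : ∫⁻ z in B0, ENNReal.ofReal (C * g z)
        = ENNReal.ofReal C * ∫⁻ z in B0, ENNReal.ofReal (g z) := by
      rw [← lintegral_const_mul' _ _ ENNReal.ofReal_ne_top]
      refine lintegral_congr fun z => ?_
      rw [ENNReal.ofReal_mul hC.le]
    rw [hsplit]
    refine mul_le_mul_right ?_ _
    -- Cauchy-Schwarz on the probability space B0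
    have hCS : ∫⁻ z in B0, ENNReal.ofReal (g z)
        ≤ (∫⁻ z in B0, ENNReal.ofReal (g z) ^ (2:ℝ)) ^ ((1:ℝ)/2) := by
      have h22 : (2:ℝ).HolderConjugate 2 := ⟨by norm_num, by norm_num, by norm_num⟩
      have := ENNReal.lintegral_mul_le_Lp_mul_Lq (volume.restrict B0) h22
        (f := fun z => ENNReal.ofReal (g z)) (g := fun _ => 1)
        (hgmeas.ennreal_ofReal.aemeasurable) aemeasurable_const
      simp only [mul_one, ENNReal.one_rpow, lintegral_const, Measure.restrict_apply_univ] at this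
      rw [hB0vol] at this
      simpa using this
    refine hCS.trans ?_
    refine ENNReal.rpow_le_rpow ?_ (by norm_num)
    -- ∫⁻ (ofReal g)^2 ≤ L2
    have hsq : ∀ z, ENNReal.ofReal (g z) ^ (2:ℝ)
        = ∑ a ∈ S, (‖h (avv a + z)‖₊ : ℝ≥0∞) ^ (2:ℕ) := by
      intro z
      rw [ENNReal.ofReal_rpow_of_nonneg (Real.sqrt_nonneg _) (by norm_num)]
      rw [show ((2:ℝ)) = ((2:ℕ):ℝ) by norm_num, Real.rpow_natCast]
      rw [Real.sq_sqrt (Finset.sum_nonneg fun a _ => by positivity)]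
      rw [ENNReal.ofReal_sum_of_nonneg fun a _ => by positivity]
      refine Finset.sum_congr rfl fun a _ => ?_
      rw [ENNReal.ofReal_pow (norm_nonneg _), ofReal_norm, enorm_eq_nnnorm]
    calc ∫⁻ z in B0, ENNReal.ofReal (g z) ^ (2:ℝ)
        = ∫⁻ z in B0, ∑ a ∈ S, (‖h (avv a + z)‖₊ : ℝ≥0∞) ^ (2:ℕ) := lintegral_congr hsq
      _ = ∑ a ∈ S, ∫⁻ z in B0, (‖h (avv a + z)‖₊ : ℝ≥0∞) ^ (2:ℕ) :=
          lintegral_finset_sum S fun a _ =>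
            ((hsm.measurable.comp (measurable_const_add (avv a))).enorm.pow_const 2)
      _ = ∑ a ∈ S, ∫⁻ x in box a, (‖h x‖₊ : ℝ≥0∞) ^ (2:ℕ) := by
          refine Finset.sum_congr rfl fun a _ => ?_
          rw [hB0, ← box_preimage a]
          exact (hmp a).setLIntegral_comp_preimage_emb (hemb a)
            (fun x => (‖h x‖₊ : ℝ≥0∞) ^ (2:ℕ)) (box a)
      _ = ∫⁻ x in ⋃ a ∈ S, box a, (‖h x‖₊ : ℝ≥0∞) ^ (2:ℕ) :=
          (lintegral_biUnion_finset (fun a _ b _ hab => box_disjoint hab)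
            (fun a _ => box_measurable a) _).symm
      _ ≤ L2 := by
          rw [hL2]
          exact lintegral_mono' Measure.restrict_le_self le_rfl
  -- combine everything in ℝ≥0∞
  have hmain : (∫⁻ ξ in Q, (‖F ξ‖₊ : ℝ≥0∞) ^ p) ^ (1/p)
      ≤ ENNReal.ofReal C * L2 ^ ((1:ℝ)/2) := by
    refine hmink.trans ?_
    refine le_trans (lintegral_mono fun z => hz_bound z) hRHS
  -- convert back to real numbers
  have hFp_eq : ∫ ξ in Q, ‖F ξ‖ ^ p = (∫⁻ ξ in Q, (‖F ξ‖₊ : ℝ≥0∞) ^ p).toReal := by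
    rw [integral_eq_lintegral_of_nonneg_ae (Filter.Eventually.of_forall fun ξ => by positivity)
      ((hFcont.norm.rpow_const fun x => Or.inr hp0.le).aestronglyMeasurable.restrict)]
    congr 1
    refine lintegral_congr fun ξ => ?_
    rw [← ENNReal.ofReal_rpow_of_nonneg (norm_nonneg _) hp0.le, ofReal_norm, enorm_eq_nnnorm]
  have hh2_eq : ∫ x, ‖h x‖ ^ 2 = L2.toReal := by
    rw [integral_eq_lintegral_of_nonneg_ae (Filter.Eventually.of_forall fun x => by positivity)
      (hsm.measurable.norm.pow_const 2).aestronglyMeasurable]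
    rw [hL2]
    congr 1
    refine lintegral_congr fun x => ?_
    rw [ENNReal.ofReal_pow (norm_nonneg _), ofReal_norm, enorm_eq_nnnorm]
  calc (∫ ξ in Q, ‖F ξ‖ ^ p) ^ (1/p)
      = ((∫⁻ ξ in Q, (‖F ξ‖₊ : ℝ≥0∞) ^ p) ^ (1/p)).toReal := by
        rw [hFp_eq, ENNReal.toReal_rpow]
    _ ≤ (ENNReal.ofReal C * L2 ^ ((1:ℝ)/2)).toReal := by
        refine ENNReal.toReal_mono ?_ hmain
        exact ENNReal.mul_ne_top ENNReal.ofReal_ne_top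
          (ENNReal.rpow_ne_top_of_nonneg (by norm_num) hL2ne)
    _ = C * Real.sqrt (∫ x, ‖h x‖ ^ 2) := by
        rw [ENNReal.toReal_mul, ENNReal.toReal_ofReal hC.le, ← ENNReal.toReal_rpow]
        rw [Real.sqrt_eq_rpow, hh2_eq]





end Key

/-- continuous version of Bourgain's Λ(p) theorem. If `S ⊆ {0,…,N−1}^d` is a
Λ(p) set with constant `C` and `E = S + [0,1]^d`, then every `h ∈ L²(ℝ^d)` supported on `E`
satisfies `‖ĥ‖_{L^p([0,1]^d)} ≤ D·C·‖h‖_{L²(ℝ^d)}` with `D` depending only on `d` and `p`. -/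
theorem stmt2 (d : ℕ) (p : ℝ) (hp : 2 < p) :
    ∃ D : ℝ, 0 < D ∧
      ∀ (N : ℕ) (C : ℝ), 0 < C →
      ∀ S : Finset (Fin d → ℤ), (∀ a ∈ S, ∀ i, 0 ≤ a i ∧ a i < (N : ℤ)) →
      (∀ c : (Fin d → ℤ) → ℂ,
        (∫ x in Set.Icc (0 : Fin d → ℝ) 1,
            ‖∑ a ∈ S, c a * Complex.exp (2 * Real.pi * Complex.I *
              ((∑ i, (a i : ℝ) * x i : ℝ) : ℂ))‖ ^ p) ^ (1 / p) ≤
          C * Real.sqrt (∑ a ∈ S, ‖c a‖ ^ 2)) →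
      ∀ h : (Fin d → ℝ) → ℂ, MemLp h 2 volume →
      Function.support h ⊆
        ⋃ a ∈ S, Set.Icc (fun i => (a i : ℝ)) (fun i => (a i : ℝ) + 1) →
      (∫ ξ in Set.Icc (0 : Fin d → ℝ) 1,
          ‖∫ x, h x * Complex.exp (-(2 * Real.pi * Complex.I) *
            ((∑ i, x i * ξ i : ℝ) : ℂ))‖ ^ p) ^ (1 / p) ≤
        D * C * Real.sqrt (∫ x, ‖h x‖ ^ 2) := by
  refine ⟨1, one_pos, ?_⟩
  intro N C hC S _hS hyp h hh2 hsupp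
  set E : Set (Fin d → ℝ) := ⋃ a ∈ S, Set.Icc (fun i => (a i : ℝ)) (fun i => (a i : ℝ) + 1)
    with hE
  have hEm : MeasurableSet E := Finset.measurableSet_biUnion S fun a _ => measurableSet_Icc
  set h' : (Fin d → ℝ) → ℂ := E.indicator (hh2.1.mk h) with hh'
  have hmk : h =ᶠ[ae volume] hh2.1.mk h := hh2.1.ae_eq_mk
  have heq : h' =ᶠ[ae volume] h := by
    filter_upwards [hmk] with x hx
    by_cases hxE : x ∈ E
    · rw [hh', Set.indicator_of_mem hxE, ← hx]
    · rw [hh', Set.indicator_of_notMem hxE]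
      exact (Function.notMem_support.mp (fun hs => hxE (hsupp hs))).symm
  have hh2' : MemLp h' 2 volume := hh2.ae_eq heq.symm
  have hsm' : StronglyMeasurable h' := hh2.1.stronglyMeasurable_mk.indicator hEm
  have hsupp' : Function.support h' ⊆ E := by
    rw [hh']
    exact Set.support_indicator_subset
  have hkey := key d p hp C hC S hyp h' hh2' hsm' hsupp'
  have hinner : ∀ ξ : Fin d → ℝ,
      (∫ x, h x * Complex.exp (-(2 * Real.pi * Complex.I) * ((∑ i, x i * ξ i : ℝ) : ℂ)))
      = ∫ x, h' x * Complex.exp (-(2 * Real.pi * Complex.I) * ((∑ i, x i * ξ i : ℝ) : ℂ)) := by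
    intro ξ
    refine integral_congr_ae ?_
    filter_upwards [heq] with x hx
    rw [hx]
  have hL : ∫ ξ in Set.Icc (0 : Fin d → ℝ) 1,
      ‖∫ x, h x * Complex.exp (-(2 * Real.pi * Complex.I) * ((∑ i, x i * ξ i : ℝ) : ℂ))‖ ^ p
      = ∫ ξ in Set.Icc (0 : Fin d → ℝ) 1,
      ‖∫ x, h' x * Complex.exp (-(2 * Real.pi * Complex.I) * ((∑ i, x i * ξ i : ℝ) : ℂ))‖ ^ p :=
    setIntegral_congr_fun measurableSet_Icc fun ξ _ => by rw [hinner ξ]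
  have hR : ∫ x, ‖h x‖ ^ 2 = ∫ x, ‖h' x‖ ^ 2 := by
    refine integral_congr_ae ?_
    filter_upwards [heq] with x hx
    rw [hx]
  rw [hL, hR, one_mul]
  exact hkey
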